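/- Let m ≥ 1 and let D be any set of Dyck words of length 2m. Then the set {1·w : w ∈ D} of binary words of length 2m+1 obtained by prepending the symbol 1 to each word of D is mutually uncorrelated. -/
import Mathlib


/-- The four-letter DNA alphabet. -/
inductive DNA | A | T | G | C
deriving DecidableEq

/-- Hamming distance between two words (of equal length) given as lists. -/
def hammingD {α : Type*} [DecidableEq α] (x y : List α) : ℕ :=
  (x.zip y).countP (fun p => decide (p.1 ≠ p.2))

/-- A binary word has `D`-bounded running digital sum if in every prefix the
numbers of ones and zeros differ by at most `D`. -/
def brds (D : ℕ) (w : List Bool) : Prop :=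
  ∀ k ≤ w.length,
    (((w.take k).count true : ℤ) - ((w.take k).count false : ℤ)).natAbs ≤ D

/-- The letters `G`, `C` of the DNA alphabet. -/
def isGC : DNA → Bool
  | DNA.G => true
  | DNA.C => true
  | _ => false

/-- A DNA word is `D`-GC-prefix-balanced if in every prefix the number of
letters from {G,C} and the number of letters from {A,T} differ by at most `D`. -/
def gcpb (D : ℕ) (w : List DNA) : Prop :=
  ∀ k ≤ w.length,
    (((w.take k).countP isGC : ℤ) - ((w.take k).countP (fun c => !(isGC c)) : ℤ)).natAbs ≤ D

/-- A word is self-uncorrelated if no proper nonempty prefix equals the suffix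
of the same length. -/
def selfUncorr {α : Type*} (w : List α) : Prop :=
  ∀ k, 1 ≤ k → k ≤ w.length - 1 → w.take k ≠ w.drop (w.length - k)

/-- A set of words is mutually uncorrelated if every word is self-uncorrelated
and for every ordered pair of distinct words `x`, `y` no nonempty prefix of `y`
equals a suffix of `x` of the same length. -/
def mutUncorr {α : Type*} (S : Set (List α)) : Prop :=
  (∀ w ∈ S, selfUncorr w) ∧
  ∀ x ∈ S, ∀ y ∈ S, x ≠ y →
    ∀ k, 1 ≤ k → k ≤ x.length → y.take k ≠ x.drop (x.length - k)

/-- A Dyck word: equal numbers of ones and zeros, and every prefix has at least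
as many ones as zeros. -/
def isDyck (w : List Bool) : Prop :=
  w.count true = w.count false ∧
  ∀ k ≤ w.length, (w.take k).count false ≤ (w.take k).count true

/-- The height of a (Dyck) word is at most `D`: in every prefix the number of
ones exceeds the number of zeros by at most `D`. -/
def heightLe (D : ℕ) (w : List Bool) : Prop :=
  ∀ k ≤ w.length, ((w.take k).count true : ℤ) - ((w.take k).count false : ℤ) ≤ (D : ℤ)

/-- Signed count: number of ones minus number of zeros. -/
def gB (l : List Bool) : ℤ := (l.count true : ℤ) - l.count false

lemma gB_cons_true (l : List Bool) : gB (true :: l) = 1 + gB l := by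
  simp [gB, List.count_cons]; ring

lemma gB_append (a b : List Bool) : gB (a ++ b) = gB a + gB b := by
  simp [gB, List.count_append]; ring

lemma gB_drop (l : List Bool) (j : ℕ) : gB (l.drop j) = gB l - gB (l.take j) := by
  have h := gB_append (l.take j) (l.drop j)
  rw [List.take_append_drop] at h
  omega

lemma dyck_take_nonneg {w : List Bool} (hd : isDyck w) (k : ℕ) :
    0 ≤ gB (w.take k) := by
  rcases le_or_gt k w.length with hk | hk
  · have := hd.2 k hk
    unfold gB; omega
  · rw [List.take_of_length_le (le_of_lt hk)]
    have := hd.1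
    unfold gB; omega

lemma dyck_total {w : List Bool} (hd : isDyck w) : gB w = 0 := by
  have := hd.1
  unfold gB; omega

lemma key (wy wx : List Bool) (hdy : isDyck wy) (hdx : isDyck wx)
    (k : ℕ) (h1 : 1 ≤ k) (h2 : k ≤ wx.length) :
    (true :: wy).take k ≠ (true :: wx).drop (wx.length - k + 1) := by
  intro h
  obtain ⟨k', rfl⟩ := Nat.exists_eq_add_of_le h1
  rw [show 1 + k' = k' + 1 from Nat.add_comm 1 k'] at h
  rw [List.take_succ_cons, List.drop_succ_cons] at h
  have e := congrArg gB h
  rw [gB_cons_true, gB_drop] at e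
  have p1 := dyck_take_nonneg hdy k'
  have p2 := dyck_take_nonneg hdx (wx.length - (k' + 1))
  have p3 := dyck_total hdx
  omega

/-- prepending a one to every word of a set of Dyck words of
length `2m` yields a mutually uncorrelated set of binary words. -/
theorem stmt6 (m : ℕ) (hm : 1 ≤ m) (Dset : Set (List Bool))
    (hDset : ∀ w ∈ Dset, w.length = 2 * m ∧ isDyck w) :
    mutUncorr ((fun w => true :: w) '' Dset) := by
  constructor
  · rintro w ⟨u, hu, rfl⟩
    intro k h1 h2 h
    have hlen : (true :: u).length = u.length + 1 := rfl
    rw [hlen] at h2 h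
    simp only [Nat.add_sub_cancel] at h2
    exact key u u (hDset u hu).2 (hDset u hu).2 k h1 h2
      (by rw [show u.length + 1 - k = u.length - k + 1 from by omega] at h; exact h)
  · rintro x ⟨ux, hux, rfl⟩ y ⟨uy, huy, rfl⟩ hne k h1 h2 h
    have hlen : (true :: ux).length = ux.length + 1 := rfl
    rw [hlen] at h2 h
    rcases Nat.lt_or_ge k (ux.length + 1) with hk | hk
    · have hk' : k ≤ ux.length := by omega
      exact key uy ux (hDset uy huy).2 (hDset ux hux).2 k h1 hk'
        (by rw [show ux.length + 1 - k = ux.length - k + 1 from by omega] at h; exact h)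
    · have hk' : k = ux.length + 1 := le_antisymm h2 hk
      subst hk'
      rw [Nat.sub_self, List.drop_zero] at h
      have hlx := (hDset ux hux).1
      have hly := (hDset uy huy).1
      have htk : List.take (ux.length + 1) (true :: uy) = true :: uy :=
        List.take_of_length_le (by simp; omega)
      have h'' : true :: uy = true :: ux := by rw [← htk]; exact h
      exact hne h''.symm
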